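/- Every language accepted by a weight-reducing deterministic one-tape Turing machine is regular. -/

import Mathlib

/-- A deterministic one-tape Turing machine over input alphabet `A`,
states `Q`, working alphabet `Γ`. -/
structure DTM (A Q Γ : Type*) where
  /-- embedding of input symbols into the working alphabet -/
  embed : A → Γ
  /-- the blank symbol -/
  blank : Γ
  /-- the initial state -/
  q0 : Q
  /-- the set of final states -/
  F : Set Q
  /-- the partial transition function; `true` means a right move -/
  δ : Q → Γ → Option (Q × Γ × Bool)

/-- A configuration: current state, tape contents, head position. -/
structure TMCfg (Q Γ : Type*) where
  state : Q
  tape : ℤ → Γ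
  head : ℤ

namespace DTM

variable {A Q Γ : Type*}

/-- One computation step (partial). -/
def stepCfg (M : DTM A Q Γ) (c : TMCfg Q Γ) : Option (TMCfg Q Γ) :=
  (M.δ c.state (c.tape c.head)).map (fun t =>
    ⟨t.1, Function.update c.tape c.head t.2.1,
      if t.2.2 then c.head + 1 else c.head - 1⟩)

/-- Initial tape contents on input `w`: the input occupies cells `0,…,|w|-1`,
all other cells are blank. -/
def initTape (M : DTM A Q Γ) (w : List A) : ℤ → Γ :=
  fun i => if 0 ≤ i then (w.map M.embed).getD i.toNat M.blank else M.blank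

/-- The initial configuration on input `w`. -/
def initCfg (M : DTM A Q Γ) (w : List A) : TMCfg Q Γ :=
  ⟨M.q0, M.initTape w, 0⟩

/-- The configuration reached after `n` steps on input `w` (`none` if the
machine halted earlier). -/
def run (M : DTM A Q Γ) (w : List A) : ℕ → Option (TMCfg Q Γ)
  | 0 => some (M.initCfg w)
  | n + 1 => (M.run w n).bind M.stepCfg

/-- `M` accepts `w` if its computation on `w` halts in a final state. -/
def Accepts (M : DTM A Q Γ) (w : List A) : Prop :=
  ∃ n c, M.run w n = some c ∧ M.stepCfg c = none ∧ c.state ∈ M.F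

/-- The language accepted by `M`. -/
def lang (M : DTM A Q Γ) : Language A := { w | M.Accepts w }

/-- `M` is weight-reducing: there is a strict partial order on `Γ` such that
every transition rewrites the scanned symbol with a strictly smaller one. -/
def WeightReducing (M : DTM A Q Γ) : Prop :=
  ∃ lt : Γ → Γ → Prop, IsStrictOrder Γ lt ∧
    ∀ p σ q τ d, M.δ p σ = some (q, τ, d) → lt τ σ

/-- The set of time instants at which the computation of `M` on `w` visits
(i.e. has its head scanning) the tape cell `i`. -/
def visits (M : DTM A Q Γ) (w : List A) (i : ℤ) : Set ℕ :=
  { n | ∃ c, M.run w n = some c ∧ c.head = i }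

/-- The computation of `M` on `w` is infinite. -/
def InfiniteOn (M : DTM A Q Γ) (w : List A) : Prop :=
  ∀ n, (M.run w n).isSome

end DTM

namespace WRproof

open DTM

variable {A Q Γ : Type*}

/-! ### Myhill–Nerode style sufficient condition for regularity -/

theorem isRegular_of_finite_index {A : Type*} (L : Language A)
    (ι : Type*) [Finite ι] (f : List A → ι)
    (hf : ∀ u v, f u = f v → ∀ z, (u ++ z ∈ L ↔ v ++ z ∈ L)) :
    L.IsRegular := by
  classical
  -- the Nerode right congruence
  let r : Setoid (List A) :=
    ⟨fun u v => ∀ z, (u ++ z ∈ L ↔ v ++ z ∈ L),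
      ⟨fun u z => Iff.rfl, fun h z => (h z).symm, fun h1 h2 z => (h1 z).trans (h2 z)⟩⟩
  haveI := Fintype.ofFinite ι
  haveI : Finite (Option ι) := Finite.of_fintype _
  let σ := Quotient r
  have hσfin : Finite σ := by
    have hsurj : Function.Surjective (fun i : Option ι =>
        if h : ∃ u, f u = i then (Quotient.mk r h.choose : σ) else Quotient.mk r []) := by
      intro x
      induction x using Quotient.inductionOn with
      | h u =>
        refine ⟨some (f u), ?_⟩
        have h : ∃ v, f v = some (f u) := ⟨u, rfl⟩
        simp only [h, dif_pos]
        exact Quotient.sound (hf _ _ (Option.some_injective _ h.choose_spec) )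
    exact Finite.of_surjective _ hsurj
  -- build the DFA on σ
  let step : σ → A → σ := fun x a =>
    Quotient.lift (fun u => (Quotient.mk r (u ++ [a]) : σ))
      (by
        intro u v huv
        refine Quotient.sound (fun z => ?_)
        simpa [List.append_assoc] using huv ([a] ++ z)) x
  let accept : Set σ :=
    {x | Quotient.lift (fun u => u ∈ L)
      (by
        intro u v huv
        simpa using propext (huv [])) x}
  let D : DFA A σ := ⟨step, Quotient.mk r [], accept⟩
  have heval : ∀ (w : List A) (u : List A),
      D.evalFrom (Quotient.mk r u) w = Quotient.mk r (u ++ w) := by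
    intro w
    induction w with
    | nil => intro u; simp [DFA.evalFrom]
    | cons a w ih =>
      intro u
      have : D.evalFrom (Quotient.mk r u) (a :: w)
          = D.evalFrom (D.step (Quotient.mk r u) a) w := rfl
      rw [this]
      have hstep : D.step (Quotient.mk r u) a = Quotient.mk r (u ++ [a]) := rfl
      rw [hstep, ih]
      simp
  have haccepts : D.accepts = L := by
    ext w
    have : D.eval w = Quotient.mk r w := by
      have := heval w []
      simpa [DFA.eval] using this
    rw [DFA.mem_accepts, this]
    rfl
  -- transport to a Fintype in `Type 0`
  obtain ⟨n, ⟨e⟩⟩ := Finite.exists_equiv_fin σ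
  exact ⟨Fin n, inferInstance, DFA.reindex e D, by simp [haccepts]⟩

end WRproof
namespace WRproof2
open DTM
variable {A Q Γ : Type*}

/-- Iterating the step function from an arbitrary configuration. -/
def steps (M : DTM A Q Γ) (c : TMCfg Q Γ) : ℕ → Option (TMCfg Q Γ)
  | 0 => some c
  | n + 1 => (steps M c n).bind M.stepCfg

theorem run_eq_steps (M : DTM A Q Γ) (w : List A) (n : ℕ) :
    M.run w n = steps M (M.initCfg w) n := by
  induction n with
  | zero => rfl
  | succ n ih => simp [DTM.run, steps, ih]

theorem steps_add (M : DTM A Q Γ) (c : TMCfg Q Γ) (a b : ℕ) :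
    steps M c (a + b) = (steps M c a).bind (fun d => steps M d b) := by
  induction b with
  | zero => simp [steps]
  | succ b ih =>
    have : a + (b + 1) = (a + b) + 1 := by omega
    rw [this, steps, ih]
    cases h : steps M c a with
    | none => simp
    | some d => simp [steps]

theorem steps_some_of_succ {M : DTM A Q Γ} {c : TMCfg Q Γ} {n : ℕ} {d : TMCfg Q Γ}
    (h : steps M c (n + 1) = some d) : ∃ e, steps M c n = some e ∧ M.stepCfg e = some d := by
  rw [steps] at h
  cases he : steps M c n with
  | none => rw [he] at h; simp at h
  | some e => rw [he] at h; exact ⟨e, rfl, h⟩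

theorem steps_some_of_le {M : DTM A Q Γ} {c : TMCfg Q Γ} {n : ℕ}
    (h : (steps M c n).isSome) : ∀ k ≤ n, (steps M c k).isSome := by
  induction n with
  | zero => intro k hk; interval_cases k; exact h
  | succ n ih =>
    intro k hk
    rcases Nat.lt_or_ge k (n+1) with h1 | h1
    · refine ih ?_ k (by omega)
      rw [steps] at h
      cases he : steps M c n with
      | none => rw [he] at h; simp at h
      | some e => simp
    · have : k = n + 1 := by omega
      subst this; exact h

theorem steps_halt {M : DTM A Q Γ} {c d : TMCfg Q Γ} {n : ℕ}
    (h : steps M c n = some d) (hd : M.stepCfg d = none) (j : ℕ) :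
    steps M c (n + 1 + j) = none := by
  induction j with
  | zero =>
    have : n + 1 + 0 = n + 1 := by omega
    rw [this, steps, h]; simpa using hd
  | succ j ih =>
    have : n + 1 + (j + 1) = (n + 1 + j) + 1 := by omega
    rw [this, steps, ih]; rfl

/-- Uniqueness of the halting configuration along a computation. -/
theorem halt_unique {M : DTM A Q Γ} {c : TMCfg Q Γ} {n₁ n₂ : ℕ} {c₁ c₂ : TMCfg Q Γ}
    (h₁ : steps M c n₁ = some c₁) (hs₁ : M.stepCfg c₁ = none)
    (h₂ : steps M c n₂ = some c₂) (hs₂ : M.stepCfg c₂ = none) : c₁ = c₂ := by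
  have key : n₁ = n₂ := by
    by_contra hne
    rcases Nat.lt_or_ge n₁ n₂ with h | h
    · have : steps M c (n₁ + 1 + (n₂ - n₁ - 1)) = none := steps_halt h₁ hs₁ _
      have h2 : n₁ + 1 + (n₂ - n₁ - 1) = n₂ := by omega
      rw [h2, h₂] at this; simp at this
    · have hlt : n₂ < n₁ := by omega
      have : steps M c (n₂ + 1 + (n₁ - n₂ - 1)) = none := steps_halt h₂ hs₂ _
      have h2 : n₂ + 1 + (n₁ - n₂ - 1) = n₁ := by omega
      rw [h2, h₁] at this; simp at this
  subst key; rw [h₁] at h₂; exact Option.some_injective _ h₂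

theorem head_step {M : DTM A Q Γ} {c d : TMCfg Q Γ} (h : M.stepCfg c = some d) :
    d.head = c.head + 1 ∨ d.head = c.head - 1 := by
  unfold DTM.stepCfg at h
  cases hδ : M.δ c.state (c.tape c.head) with
  | none => rw [hδ] at h; simp at h
  | some t =>
    rw [hδ] at h; simp only [Option.map_some] at h
    cases h; cases t.2.2 <;> simp

theorem step_state_tape {M : DTM A Q Γ} {c d : TMCfg Q Γ} (h : M.stepCfg c = some d) :
    ∃ q' τ dir, M.δ c.state (c.tape c.head) = some (q', τ, dir) ∧
      d = ⟨q', Function.update c.tape c.head τ, if dir then c.head + 1 else c.head - 1⟩ := by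
  unfold DTM.stepCfg at h
  cases hδ : M.δ c.state (c.tape c.head) with
  | none => rw [hδ] at h; simp at h
  | some t =>
    rw [hδ] at h; simp only [Option.map_some] at h
    exact ⟨t.1, t.2.1, t.2.2, rfl, (Option.some_injective _ h).symm⟩

end WRproof2
namespace WRproof2
open DTM
variable {A Q Γ : Type*}

/-- Possible outcomes of a left-region excursion. -/
inductive LOut (Q : Type*) where
  | exits (q : Q)
  | halts (b : Bool)
  | diverges
deriving DecidableEq

def encLOut : LOut Q → (Q ⊕ Bool ⊕ Unit)
  | .exits q => Sum.inl q
  | .halts b => Sum.inr (Sum.inl b)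
  | .diverges => Sum.inr (Sum.inr ())

theorem encLOut_injective : Function.Injective (encLOut (Q := Q)) := by
  intro x y h
  cases x <;> cases y <;> simp [encLOut] at h ⊢ <;> simp [h]

instance [Finite Q] : Finite (LOut Q) := Finite.of_injective _ encLOut_injective

theorem steps_none_halt {M : DTM A Q Γ} {c : TMCfg Q Γ} {n : ℕ}
    (h : steps M c n = none) : ∃ k d, steps M c k = some d ∧ M.stepCfg d = none := by
  induction n with
  | zero => simp [steps] at h
  | succ n ih =>
    cases he : steps M c n with
    | none => exact ih he
    | some d =>
      rw [steps, he] at h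
      exact ⟨n, d, he, h⟩

open Classical in
/-- The outcome of one excursion of `M` strictly left of boundary `m`,
together with the exit configuration (junk if no exit). -/
noncomputable def exc (M : DTM A Q Γ) (m : ℤ) (c : TMCfg Q Γ) : LOut Q × TMCfg Q Γ :=
  if hex : ∃ n, ∃ d, steps M c n = some d ∧ m ≤ d.head then
    (LOut.exits (Classical.choose (Nat.find_spec hex)).state,
      Classical.choose (Nat.find_spec hex))
  else if hhl : ∃ n, ∃ d, steps M c n = some d ∧ M.stepCfg d = none then
    (LOut.halts (decide ((Classical.choose (Classical.choose_spec hhl)).state ∈ M.F)), c)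
  else (LOut.diverges, c)

theorem exc_exits_spec {M : DTM A Q Γ} {m : ℤ} {c : TMCfg Q Γ} {q : Q}
    (hc : c.head ≤ m) (h : (exc M m c).1 = LOut.exits q) :
    ∃ n, steps M c n = some (exc M m c).2 ∧ (exc M m c).2.head = m ∧
      (exc M m c).2.state = q ∧ ∀ k < n, ∀ d, steps M c k = some d → d.head < m := by
  classical
  unfold exc at h ⊢
  split_ifs at h ⊢ with hex hhl
  · refine ⟨Nat.find hex, ?_⟩
    obtain ⟨hse, hhead⟩ := Classical.choose_spec (Nat.find_spec hex)
    have hmin : ∀ k < Nat.find hex, ∀ d, steps M c k = some d → d.head < m := by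
      intro k hk d hd
      by_contra hge
      exact Nat.find_min hex hk ⟨d, hd, le_of_not_gt hge⟩
    have hstate : (Classical.choose (Nat.find_spec hex)).state = q := by
      simpa using h
    have key : ∀ (N : ℕ) (e : TMCfg Q Γ), steps M c N = some e → m ≤ e.head →
        (∀ k < N, ∀ d, steps M c k = some d → d.head < m) → e.head = m := by
      intro N e hse hhead hmin
      rcases Nat.eq_zero_or_pos N with h0 | h0
      · subst h0
        have hce : c = e := by simpa [steps] using hse
        subst hce
        omega
      · obtain ⟨k, hk⟩ := Nat.exists_eq_succ_of_ne_zero (by omega : N ≠ 0)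
        subst hk
        obtain ⟨e', he', hstep⟩ := steps_some_of_succ hse
        have hel : e'.head < m := hmin k (by omega) e' he'
        have := head_step hstep
        omega
    exact ⟨hse, key _ _ hse hhead hmin, hstate, hmin⟩

theorem exc_halts_spec {M : DTM A Q Γ} {m : ℤ} {c : TMCfg Q Γ} {b : Bool}
    (h : (exc M m c).1 = LOut.halts b) :
    (∀ n d, steps M c n = some d → d.head < m) ∧
      ∃ n d, steps M c n = some d ∧ M.stepCfg d = none ∧ (b = true ↔ d.state ∈ M.F) := by
  classical
  unfold exc at h
  split_ifs at h with hex hhl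
  · push_neg at hex
    constructor
    · intro n d hd
      exact hex n d hd
    · obtain ⟨hd, hstep⟩ := Classical.choose_spec (Classical.choose_spec hhl)
      refine ⟨_, _, hd, hstep, ?_⟩
      have hb : decide ((Classical.choose (Classical.choose_spec hhl)).state ∈ M.F) = b := by
        simpa using h
      rw [← hb]
      simp

theorem exc_div_spec {M : DTM A Q Γ} {m : ℤ} {c : TMCfg Q Γ}
    (h : (exc M m c).1 = LOut.diverges) :
    ∀ n, ∃ d, steps M c n = some d ∧ d.head < m := by
  classical
  unfold exc at h
  split_ifs at h with hex hhl
  · push_neg at hex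
    push_neg at hhl
    intro n
    cases hd : steps M c n with
    | none =>
      obtain ⟨k, d, hk, hstep⟩ := steps_none_halt hd
      exact absurd hstep (hhl k d hk)
    | some d => exact ⟨d, rfl, hex n d hd⟩

end WRproof2
namespace WRproof2
open DTM
variable {A Q Γ : Type*}

/-- Two configurations agree on the region strictly left of `m`. -/
def AgreeL (m : ℤ) (c₁ c₂ : TMCfg Q Γ) : Prop :=
  c₁.state = c₂.state ∧ c₁.head = c₂.head ∧ ∀ i < m, c₁.tape i = c₂.tape i

theorem step_par {M : DTM A Q Γ} {m : ℤ} {c₁ c₂ : TMCfg Q Γ}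
    (h : AgreeL m c₁ c₂) (hh : c₂.head < m) :
    (M.stepCfg c₁ = none ∧ M.stepCfg c₂ = none) ∨
    ∃ d₁ d₂, M.stepCfg c₁ = some d₁ ∧ M.stepCfg c₂ = some d₂ ∧ AgreeL m d₁ d₂ ∧
      ∀ i, m ≤ i → d₁.tape i = c₁.tape i := by
  obtain ⟨hs, hhd, ht⟩ := h
  have hscan : c₁.tape c₁.head = c₂.tape c₂.head := by
    rw [hhd]; exact ht c₂.head hh
  cases hδ : M.δ c₂.state (c₂.tape c₂.head) with
  | none =>
    left
    constructor <;> (unfold DTM.stepCfg) <;>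
      first
        | (rw [hs, hscan, hδ]; rfl)
        | (rw [hδ]; rfl)
  | some t =>
    right
    obtain ⟨q', τ, dir⟩ := t
    refine ⟨⟨q', Function.update c₁.tape c₁.head τ,
        if dir then c₁.head + 1 else c₁.head - 1⟩,
      ⟨q', Function.update c₂.tape c₂.head τ,
        if dir then c₂.head + 1 else c₂.head - 1⟩, ?_, ?_, ?_, ?_⟩
    · unfold DTM.stepCfg; rw [hs, hscan, hδ]; rfl
    · unfold DTM.stepCfg; rw [hδ]; rfl
    · refine ⟨rfl, by simp [hhd], ?_⟩
      intro i hi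
      show Function.update c₁.tape c₁.head τ i = Function.update c₂.tape c₂.head τ i
      rw [Function.update_apply, Function.update_apply, hhd]
      split_ifs with h1
      · rfl
      · exact ht i hi
    · intro i hi
      show Function.update c₁.tape c₁.head τ i = c₁.tape i
      rw [Function.update_apply]
      split_ifs with h1
      · exfalso; omega
      · rfl

theorem par_steps {M : DTM A Q Γ} {m : ℤ} {c₁ c₂ : TMCfg Q Γ} (n : ℕ)
    (h : AgreeL m c₁ c₂)
    (hlt : ∀ k < n, ∀ d, steps M c₂ k = some d → d.head < m) :
    (steps M c₁ n = none ∧ steps M c₂ n = none) ∨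
    ∃ d₁ d₂, steps M c₁ n = some d₁ ∧ steps M c₂ n = some d₂ ∧ AgreeL m d₁ d₂ ∧
      ∀ i, m ≤ i → d₁.tape i = c₁.tape i := by
  induction n with
  | zero => exact Or.inr ⟨c₁, c₂, rfl, rfl, h, fun i _ => rfl⟩
  | succ n ih =>
    rcases ih (fun k hk => hlt k (by omega)) with ⟨h1, h2⟩ | ⟨d₁, d₂, h1, h2, hag, hun⟩
    · left; rw [steps, h1, steps, h2]; simp
    · have hd2 : d₂.head < m := hlt n (by omega) d₂ h2
      rcases step_par (M := M) hag hd2 with ⟨s1, s2⟩ | ⟨e₁, e₂, s1, s2, hag', hun'⟩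
      · left; rw [steps, h1, steps, h2]; simp [s1, s2]
      · right
        refine ⟨e₁, e₂, ?_, ?_, hag', ?_⟩
        · rw [steps, h1]; simpa using s1
        · rw [steps, h2]; simpa using s2
        · intro i hi; rw [hun' i hi, hun i hi]

/-- If the canonical left configuration exits, so does any configuration agreeing
with it left of `m`. -/
theorem real_of_exc_exits {M : DTM A Q Γ} {m : ℤ} {c₁ c₂ : TMCfg Q Γ} {q : Q}
    (h : AgreeL m c₁ c₂) (hc : c₂.head ≤ m) (he : (exc M m c₂).1 = LOut.exits q) :
    ∃ n d, steps M c₁ n = some d ∧ d.state = q ∧ d.head = m ∧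
      (∀ i < m, d.tape i = (exc M m c₂).2.tape i) ∧ ∀ i, m ≤ i → d.tape i = c₁.tape i := by
  obtain ⟨n, hse, hhd, hst, hmin⟩ := exc_exits_spec hc he
  rcases par_steps n h hmin with ⟨h1, h2⟩ | ⟨d₁, d₂, h1, h2, hag, hun⟩
  · rw [hse] at h2; simp at h2
  · rw [hse] at h2
    obtain rfl := Option.some_injective _ h2
    exact ⟨n, d₁, h1, hag.1.trans hst, hag.2.1.trans hhd, fun i hi => hag.2.2 i hi, hun⟩

theorem real_of_exc_halts {M : DTM A Q Γ} {m : ℤ} {c₁ c₂ : TMCfg Q Γ} {b : Bool}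
    (h : AgreeL m c₁ c₂) (he : (exc M m c₂).1 = LOut.halts b) :
    ∃ n d, steps M c₁ n = some d ∧ M.stepCfg d = none ∧ (b = true ↔ d.state ∈ M.F) := by
  obtain ⟨hall, n, d, hd, hstep, hb⟩ := exc_halts_spec he
  rcases par_steps n h (fun k _ => hall k) with ⟨h1, h2⟩ | ⟨d₁, d₂, h1, h2, hag, hun⟩
  · rw [hd] at h2; simp at h2
  · rw [hd] at h2
    obtain rfl := Option.some_injective _ h2
    have hscan : d₁.tape d₁.head = d.tape d.head := by
      rw [hag.2.1]; exact hag.2.2 d.head (hall n d hd)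
    have : M.stepCfg d₁ = none := by
      unfold DTM.stepCfg at hstep ⊢
      rw [hag.1, hscan]
      rw [Option.map_eq_none_iff] at hstep ⊢
      exact hstep
    refine ⟨n, d₁, h1, this, ?_⟩
    rw [hag.1]
    exact hb

theorem real_of_exc_div {M : DTM A Q Γ} {m : ℤ} {c₁ c₂ : TMCfg Q Γ}
    (h : AgreeL m c₁ c₂) (he : (exc M m c₂).1 = LOut.diverges) :
    ∀ n, (steps M c₁ n).isSome := by
  intro n
  have hall : ∀ k, ∀ d, steps M c₂ k = some d → d.head < m := by
    intro k d hd
    obtain ⟨d', hd', hh'⟩ := exc_div_spec he k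
    rw [hd'] at hd
    rw [← Option.some_injective _ hd]; exact hh'
  rcases par_steps n h (fun k _ => hall k) with ⟨h1, h2⟩ | ⟨d₁, d₂, h1, h2, _, _⟩
  · obtain ⟨d, hd, _⟩ := exc_div_spec he n
    rw [hd] at h2; simp at h2
  · rw [h1]; rfl

/-- Running the whole interaction: one excursion, then consuming the list of
re-entry states one by one. -/
noncomputable def Tfull (M : DTM A Q Γ) (m : ℤ) : List Q → TMCfg Q Γ → LOut Q × TMCfg Q Γ
  | [], c => exc M m c
  | p :: s', c =>
    match (exc M m c).1 with
    | LOut.exits _ => Tfull M m s' ⟨p, (exc M m c).2.tape, m - 1⟩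
    | _ => exc M m c

theorem Tfull_cons_exits {M : DTM A Q Γ} {m : ℤ} {c : TMCfg Q Γ} {q : Q} {p : Q} {s' : List Q}
    (h : (exc M m c).1 = LOut.exits q) :
    Tfull M m (p :: s') c = Tfull M m s' ⟨p, (exc M m c).2.tape, m - 1⟩ := by
  rw [Tfull, h]

theorem Tfull_cons_ne {M : DTM A Q Γ} {m : ℤ} {c : TMCfg Q Γ} {p : Q} {s' : List Q}
    (h : ∀ q, (exc M m c).1 ≠ LOut.exits q) :
    Tfull M m (p :: s') c = exc M m c := by
  rw [Tfull]
  cases he : (exc M m c).1 with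
  | exits q => exact absurd he (h q)
  | halts b => rfl
  | diverges => rfl

theorem Tfull_append_of_ne {M : DTM A Q Γ} {m : ℤ} (s r : List Q) (c : TMCfg Q Γ)
    (h : ∀ q, (Tfull M m s c).1 ≠ LOut.exits q) :
    Tfull M m (s ++ r) c = Tfull M m s c := by
  induction s generalizing c with
  | nil =>
    cases r with
    | nil => rfl
    | cons p r' =>
      rw [List.nil_append]
      exact Tfull_cons_ne h
  | cons p s' ih =>
    cases he : (exc M m c).1 with
    | exits q =>
      have h' := h
      rw [Tfull_cons_exits he] at h'
      rw [List.cons_append, Tfull_cons_exits he, Tfull_cons_exits he]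
      exact ih _ h'
    | halts b =>
      rw [List.cons_append, Tfull_cons_ne (by simp [he]), Tfull_cons_ne (by simp [he])]
    | diverges =>
      rw [List.cons_append, Tfull_cons_ne (by simp [he]), Tfull_cons_ne (by simp [he])]

theorem Tfull_append_singleton {M : DTM A Q Γ} {m : ℤ} (s : List Q) (c : TMCfg Q Γ)
    {q : Q} (h : (Tfull M m s c).1 = LOut.exits q) (p : Q) :
    Tfull M m (s ++ [p]) c = exc M m ⟨p, (Tfull M m s c).2.tape, m - 1⟩ := by
  induction s generalizing c with
  | nil =>
    have : Tfull M m [] c = exc M m c := rfl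
    rw [this] at h ⊢
    rw [List.nil_append, Tfull_cons_exits h]
    rfl
  | cons p' s' ih =>
    cases he : (exc M m c).1 with
    | exits q' =>
      rw [Tfull_cons_exits he] at h
      rw [List.cons_append, Tfull_cons_exits he, Tfull_cons_exits he]
      exact ih _ h
    | halts b =>
      rw [Tfull_cons_ne (by simp [he])] at h
      rw [he] at h; simp at h
    | diverges =>
      rw [Tfull_cons_ne (by simp [he])] at h
      rw [he] at h; simp at h

end WRproof2
namespace WRproof2
open DTM
variable {A Q Γ : Type*}

section Weight

variable {lt : Γ → Γ → Prop}

open Classical in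
/-- Number of symbols reachable downwards from `γ` (including `γ`). -/
noncomputable def mu [Fintype Γ] (lt : Γ → Γ → Prop) (γ : Γ) : ℕ :=
  (Finset.univ.filter (fun x => Relation.ReflTransGen lt x γ)).card

theorem mu_pos [Fintype Γ] (γ : Γ) : 1 ≤ mu lt γ := by
  classical
  rw [mu]
  have : γ ∈ Finset.univ.filter (fun x => Relation.ReflTransGen lt x γ) :=
    Finset.mem_filter.mpr ⟨Finset.mem_univ γ, Relation.ReflTransGen.refl⟩
  have := Finset.card_pos.mpr ⟨γ, this⟩
  omega

theorem mu_le_card [Fintype Γ] (γ : Γ) : mu lt γ ≤ Fintype.card Γ := by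
  classical
  exact le_trans (Finset.card_filter_le _ _) (le_of_eq (Finset.card_univ))

theorem rtg_cases (hso : IsStrictOrder Γ lt) {a b : Γ}
    (h : Relation.ReflTransGen lt a b) : a = b ∨ lt a b := by
  induction h with
  | refl => exact Or.inl rfl
  | tail _ hbc ih =>
    rcases ih with rfl | hab
    · exact Or.inr hbc
    · exact Or.inr (hso.2.trans _ _ _ hab hbc)

theorem mu_lt [Fintype Γ] (hso : IsStrictOrder Γ lt) {a b : Γ} (h : lt a b) :
    mu lt a < mu lt b := by
  classical
  have hirr : ∀ x : Γ, ¬ lt x x := fun x => hso.toIrrefl.irrefl x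
  apply Finset.card_lt_card
  have hsub : (Finset.univ.filter (fun x => Relation.ReflTransGen lt x a)) ⊆
      (Finset.univ.filter (fun x => Relation.ReflTransGen lt x b)) := by
    intro x hx
    simp only [Finset.mem_filter, Finset.mem_univ, true_and] at hx ⊢
    exact hx.trans (Relation.ReflTransGen.single h)
  rw [Finset.ssubset_iff_of_subset hsub]
  refine ⟨b, Finset.mem_filter.mpr ⟨Finset.mem_univ b, Relation.ReflTransGen.refl⟩, ?_⟩
  simp only [Finset.mem_filter, Finset.mem_univ, true_and]
  intro hba
  rcases rtg_cases hso hba with heq | hlt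
  · subst heq; exact hirr b h
  · exact hirr b (hso.2.trans _ _ _ hlt h)

variable {M : DTM A Q Γ}

theorem step_tape_rtg (hδ : ∀ p σ q τ d, M.δ p σ = some (q, τ, d) → lt τ σ)
    {c d : TMCfg Q Γ} (h : M.stepCfg c = some d) (x : ℤ) :
    Relation.ReflTransGen lt (d.tape x) (c.tape x) := by
  obtain ⟨q', τ, dir, hδ', rfl⟩ := step_state_tape h
  show Relation.ReflTransGen lt (Function.update c.tape c.head τ x) (c.tape x)
  rw [Function.update_apply]
  split_ifs with h1
  · subst h1; exact Relation.ReflTransGen.single (hδ _ _ _ _ _ hδ')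
  · rfl

theorem steps_tape_rtg (hδ : ∀ p σ q τ d, M.δ p σ = some (q, τ, d) → lt τ σ)
    {c d : TMCfg Q Γ} {n : ℕ} (h : steps M c n = some d) (x : ℤ) :
    Relation.ReflTransGen lt (d.tape x) (c.tape x) := by
  induction n generalizing d with
  | zero =>
    have : c = d := by simpa [steps] using h
    subst this; rfl
  | succ n ih =>
    obtain ⟨e, he, hstep⟩ := steps_some_of_succ h
    exact (step_tape_rtg hδ hstep x).trans (ih he)

theorem exc_exits_lt (hso : IsStrictOrder Γ lt)
    (hδ : ∀ p σ q τ d, M.δ p σ = some (q, τ, d) → lt τ σ)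
    {m : ℤ} {c : TMCfg Q Γ} {q : Q} (hc : c.head < m)
    (h : (exc M m c).1 = LOut.exits q) :
    lt ((exc M m c).2.tape (m - 1)) (c.tape (m - 1)) := by
  obtain ⟨n, hse, hhd, _, hmin⟩ := exc_exits_spec (le_of_lt hc) h
  rcases Nat.eq_zero_or_pos n with h0 | h0
  · subst h0
    have : c = (exc M m c).2 := by simpa [steps] using hse
    rw [← this] at hhd; omega
  · obtain ⟨k, rfl⟩ := Nat.exists_eq_succ_of_ne_zero (by omega : n ≠ 0)
    obtain ⟨prev, hprev, hstep⟩ := steps_some_of_succ hse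
    have hpl : prev.head < m := hmin k (by omega) prev hprev
    have hphd : prev.head = m - 1 := by
      have := head_step hstep; omega
    obtain ⟨q', τ, dir, hδ', hd⟩ := step_state_tape hstep
    have hval : (exc M m c).2.tape (m - 1) = τ := by
      rw [hd]
      show Function.update prev.tape prev.head τ (m-1) = τ
      rw [hphd, Function.update_self]
    have hlt1 : lt τ (prev.tape (m - 1)) := by
      have := hδ _ _ _ _ _ hδ'
      rwa [hphd] at this
    have hrtg : Relation.ReflTransGen lt (prev.tape (m - 1)) (c.tape (m - 1)) :=
      steps_tape_rtg hδ hprev _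
    rw [hval]
    rcases rtg_cases hso hrtg with heq | hlt2
    · rwa [← heq]
    · exact hso.2.trans _ _ _ hlt1 hlt2

theorem Tfull_exits_length [Fintype Γ] (hso : IsStrictOrder Γ lt)
    (hδ : ∀ p σ q τ d, M.δ p σ = some (q, τ, d) → lt τ σ)
    {m : ℤ} (s : List Q) {c : TMCfg Q Γ} (hc : c.head < m) {q : Q}
    (h : (Tfull M m s c).1 = LOut.exits q) :
    s.length < mu lt (c.tape (m - 1)) := by
  induction s generalizing c with
  | nil => exact mu_pos (lt := lt) (c.tape (m - 1))
  | cons p s' ih =>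
    cases he : (exc M m c).1 with
    | exits q' =>
      rw [Tfull_cons_exits he] at h
      have h1 := ih (c := ⟨p, (exc M m c).2.tape, m - 1⟩) (by show m - 1 < m; omega) h
      have h2 := mu_lt hso (exc_exits_lt hso hδ hc he)
      simp only [List.length_cons]
      calc s'.length + 1 ≤ mu lt ((exc M m c).2.tape (m-1)) := h1
        _ < mu lt (c.tape (m-1)) := h2
    | halts b => rw [Tfull_cons_ne (by simp [he]), he] at h; simp at h
    | diverges => rw [Tfull_cons_ne (by simp [he]), he] at h; simp at h

theorem Tfull_exits_le [Fintype Γ] (hso : IsStrictOrder Γ lt)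
    (hδ : ∀ p σ q τ d, M.δ p σ = some (q, τ, d) → lt τ σ)
    (u : List A) (s : List Q) {q : Q}
    (h : (Tfull M (u.length : ℤ) s (M.initCfg u)).1 = LOut.exits q) :
    s.length ≤ Fintype.card Γ := by
  set m : ℤ := (u.length : ℤ) with hm
  have hhd : (M.initCfg u).head = 0 := rfl
  rcases lt_or_ge (0 : ℤ) m with hpos | hz
  · have := Tfull_exits_length hso hδ s (by rw [hhd]; omega) h
    exact le_trans (le_of_lt this) (le_trans (mu_le_card _) (le_refl _))
  · have hm0 : m = 0 := by omega
    cases s with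
    | nil => simp
    | cons p s' =>
      cases he : (exc M m (M.initCfg u)).1 with
      | exits q' =>
        rw [Tfull_cons_exits he] at h
        have h1 := Tfull_exits_length hso hδ s'
          (c := ⟨p, (exc M m (M.initCfg u)).2.tape, m - 1⟩) (by show m - 1 < m; omega) h
        have h2 : s'.length + 1 ≤ Fintype.card Γ := le_trans h1 (mu_le_card _)
        simpa using h2
      | halts b => rw [Tfull_cons_ne (by simp [he]), he] at h; simp at h
      | diverges => rw [Tfull_cons_ne (by simp [he]), he] at h; simp at h

end Weight
end WRproof2
namespace WRproof2
open DTM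
variable {A Q Γ : Type*}

/-- Configurations of the right-region simulation machine. -/
inductive SCfg (Q Γ : Type*) where
  | acc | rej | div
  | mid (q : Q) (t : ℕ → Γ) (h : ℕ) (s : List Q)

open Classical in
/-- Re-entering the left region with outcome given by the oracle. -/
noncomputable def SentryAux (t : ℕ → Γ) (τ : Γ) (s' : List Q) : LOut Q → SCfg Q Γ
  | .exits p => .mid p (Function.update t 0 τ) 0 s'
  | .halts b => if b then .acc else .rej
  | .diverges => .div

open Classical in
noncomputable def SstepAux (M : DTM A Q Γ) (T : List Q → LOut Q) (q : Q) (t : ℕ → Γ)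
    (h : ℕ) (s : List Q) : Option (Q × Γ × Bool) → SCfg Q Γ
  | none => if q ∈ M.F then .acc else .rej
  | some (q', τ, true) => .mid q' (Function.update t h τ) (h + 1) s
  | some (q', τ, false) =>
    match h with
    | h' + 1 => .mid q' (Function.update t h τ) h' s
    | 0 => SentryAux t τ (s ++ [q']) (T (s ++ [q']))

noncomputable def Sstep (M : DTM A Q Γ) (T : List Q → LOut Q) : SCfg Q Γ → SCfg Q Γ
  | .mid q t h s => SstepAux M T q t h s (M.δ q (t h))
  | .acc => .acc
  | .rej => .rej
  | .div => .div

def ztape (M : DTM A Q Γ) (z : List A) : ℕ → Γ := fun j => (z.map M.embed).getD j M.blank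

noncomputable def SinitAux (t : ℕ → Γ) : LOut Q → SCfg Q Γ
  | .exits p => .mid p t 0 []
  | .halts b => if b then .acc else .rej
  | .diverges => .div

noncomputable def Srun (M : DTM A Q Γ) (T : List Q → LOut Q) (z : List A) : ℕ → SCfg Q Γ
  | 0 => SinitAux (ztape M z) (T [])
  | n + 1 => Sstep M T (Srun M T z n)

/-- The oracle: outcome of the left region of `u` after re-entry sequence `s`. -/
noncomputable def TT (M : DTM A Q Γ) (u : List A) : List Q → LOut Q :=
  fun s => (Tfull M (u.length : ℤ) s (M.initCfg u)).1

theorem initTape_agree_left (M : DTM A Q Γ) (u z : List A) (i : ℤ) (hi : i < (u.length : ℤ)) :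
    M.initTape (u ++ z) i = M.initTape u i := by
  unfold DTM.initTape
  split_ifs with h0
  · have htn : (i.toNat : ℤ) = i := Int.toNat_of_nonneg h0
    have hlt : i.toNat < (u.map M.embed).length := by
      simp only [List.length_map]; omega
    rw [List.map_append, List.getD_append _ _ _ _ hlt]
  · rfl

theorem initTape_right (M : DTM A Q Γ) (u z : List A) (j : ℕ) :
    M.initTape (u ++ z) ((u.length : ℤ) + j) = ztape M z j := by
  unfold DTM.initTape ztape
  have h0 : (0 : ℤ) ≤ (u.length : ℤ) + j := by positivity
  rw [if_pos h0]
  have htn : ((u.length : ℤ) + j).toNat = u.length + j := by omega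
  rw [htn, List.map_append]
  rw [List.getD_append_right]
  · simp
  · simp

end WRproof2
namespace WRproof2
open DTM
variable {A Q Γ : Type*}

/-- Invariant tying configurations of the simulation machine to the real run. -/
def SInvC (M : DTM A Q Γ) (u z : List A) : SCfg Q Γ → ℕ → Prop
  | .mid q t h s, k =>
      (∃ q0, (Tfull M (u.length : ℤ) s (M.initCfg u)).1 = LOut.exits q0) ∧
      ∃ n, k ≤ n ∧ ∃ c, M.run (u ++ z) n = some c ∧ c.state = q ∧
        c.head = (u.length : ℤ) + h ∧
        (∀ j : ℕ, c.tape ((u.length : ℤ) + j) = t j) ∧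
        (∀ i : ℤ, i < (u.length : ℤ) →
          c.tape i = (Tfull M (u.length : ℤ) s (M.initCfg u)).2.tape i)
  | .acc, _ => ∃ n c, M.run (u ++ z) n = some c ∧ M.stepCfg c = none ∧ c.state ∈ M.F
  | .rej, _ => ∃ n c, M.run (u ++ z) n = some c ∧ M.stepCfg c = none ∧ c.state ∉ M.F
  | .div, _ => ∀ n, (M.run (u ++ z) n).isSome

theorem sinv_all (M : DTM A Q Γ) (u z : List A) (k : ℕ) :
    SInvC M u z (Srun M (TT M u) z k) k := by
  classical
  induction k with
  | zero =>
    -- base case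
    have hagree : AgreeL (u.length : ℤ) (M.initCfg (u ++ z)) (M.initCfg u) :=
      ⟨rfl, rfl, fun i hi => initTape_agree_left M u z i hi⟩
    have hrun0 : Srun M (TT M u) z 0 = SinitAux (ztape M z) (TT M u []) := rfl
    rw [hrun0]
    have hTT0 : TT M u [] = (exc M (u.length : ℤ) (M.initCfg u)).1 := rfl
    cases hT : (exc M (u.length : ℤ) (M.initCfg u)).1 with
    | exits p =>
      rw [hTT0, hT]
      show SInvC M u z (SCfg.mid p (ztape M z) 0 []) 0
      obtain ⟨n, d, hsteps, hstate, hhead, hleft, hright⟩ :=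
        real_of_exc_exits hagree (by show (0:ℤ) ≤ (u.length : ℤ); positivity) hT
      refine ⟨⟨p, hT⟩, n, by omega, d, ?_, hstate, by rw [hhead]; simp, ?_, ?_⟩
      · rw [run_eq_steps]; exact hsteps
      · intro j
        have := hright ((u.length : ℤ) + j) (by omega)
        rw [this]
        exact initTape_right M u z j
      · intro i hi
        exact hleft i hi
    | halts b =>
      rw [hTT0, hT]
      obtain ⟨n, d, hsteps, hnone, hb⟩ := real_of_exc_halts hagree hT
      cases b with
      | true =>
        show SInvC M u z SCfg.acc 0
        exact ⟨n, d, by rw [run_eq_steps]; exact hsteps, hnone, hb.mp rfl⟩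
      | false =>
        show SInvC M u z SCfg.rej 0
        refine ⟨n, d, by rw [run_eq_steps]; exact hsteps, hnone, fun hF => ?_⟩
        simpa using hb.mpr hF
    | diverges =>
      rw [hTT0, hT]
      show SInvC M u z SCfg.div 0
      intro n
      rw [run_eq_steps]
      exact real_of_exc_div hagree hT n
  | succ k ih =>
    have hstep : Srun M (TT M u) z (k + 1) = Sstep M (TT M u) (Srun M (TT M u) z k) := rfl
    rw [hstep]
    cases hS : Srun M (TT M u) z k with
    | acc =>
      rw [hS] at ih
      exact ih
    | rej =>
      rw [hS] at ih
      exact ih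
    | div =>
      rw [hS] at ih
      exact ih
    | mid q t h s =>
      rw [hS] at ih
      obtain ⟨⟨q0, hex⟩, n, hkn, c, hrun, hstate, hhead, hright, hleft⟩ := ih
      have hscan : c.tape c.head = t h := by rw [hhead]; exact hright h
      have hSx : Sstep M (TT M u) (SCfg.mid q t h s)
          = SstepAux M (TT M u) q t h s (M.δ q (t h)) := rfl
      rw [hSx]
      cases hδ : M.δ q (t h) with
      | none =>
        have hcnone : M.stepCfg c = none := by
          unfold DTM.stepCfg
          rw [hstate, hscan, hδ]
          rfl
        show SInvC M u z (if q ∈ M.F then SCfg.acc else SCfg.rej) (k+1)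
        split_ifs with hF
        · exact ⟨n, c, hrun, hcnone, hstate ▸ hF⟩
        · exact ⟨n, c, hrun, hcnone, fun hq => hF (hstate ▸ hq)⟩
      | some trip =>
        obtain ⟨q', τ, dir⟩ := trip
        have hcstep : M.stepCfg c = some ⟨q', Function.update c.tape c.head τ,
            if dir then c.head + 1 else c.head - 1⟩ := by
          unfold DTM.stepCfg
          rw [hstate, hscan, hδ]
          rfl
        have hrun' : M.run (u ++ z) (n + 1) = some ⟨q', Function.update c.tape c.head τ,
            if dir then c.head + 1 else c.head - 1⟩ := by
          rw [DTM.run, hrun]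
          simpa using hcstep
        cases dir with
        | true =>
          show SInvC M u z (SCfg.mid q' (Function.update t h τ) (h + 1) s) (k+1)
          refine ⟨⟨q0, hex⟩, n + 1, by omega, _, hrun', rfl, ?_, ?_, ?_⟩
          · show (if true then c.head + 1 else c.head - 1) = (u.length : ℤ) + (h+1 : ℕ)
            rw [if_pos rfl, hhead]
            push_cast
            omega
          · intro j
            show Function.update c.tape c.head τ ((u.length : ℤ) + j) = Function.update t h τ j
            rw [Function.update_apply, Function.update_apply, hhead]
            by_cases hj : j = h
            · subst hj; rw [if_pos rfl, if_pos rfl]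
            · rw [if_neg (by omega), if_neg (by omega)]
              exact hright j
          · intro i hi
            show Function.update c.tape c.head τ i
              = (Tfull M (u.length : ℤ) s (M.initCfg u)).2.tape i
            rw [Function.update_apply, if_neg (by rw [hhead]; omega)]
            exact hleft i hi
        | false =>
          cases h with
          | succ h' =>
            show SInvC M u z (SCfg.mid q' (Function.update t (h'+1) τ) h' s) (k+1)
            refine ⟨⟨q0, hex⟩, n + 1, by omega, _, hrun', rfl, ?_, ?_, ?_⟩
            · show (if false then c.head + 1 else c.head - 1) = (u.length : ℤ) + (h' : ℕ)
              rw [if_neg (by simp), hhead]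
              push_cast
              omega
            · intro j
              show Function.update c.tape c.head τ ((u.length : ℤ) + j)
                = Function.update t (h'+1) τ j
              rw [Function.update_apply, Function.update_apply, hhead]
              by_cases hj : j = h' + 1
              · subst hj; rw [if_pos (by push_cast; omega), if_pos rfl]
              · rw [if_neg (by push_cast; omega), if_neg (by omega)]
                exact hright j
            · intro i hi
              show Function.update c.tape c.head τ i
                = (Tfull M (u.length : ℤ) s (M.initCfg u)).2.tape i
              rw [Function.update_apply, if_neg (by rw [hhead]; push_cast; omega)]
              exact hleft i hi
          | zero =>
            show SInvC M u z (SentryAux t τ (s ++ [q']) (TT M u (s ++ [q']))) (k+1)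
            have happ := Tfull_append_singleton (M := M) (m := (u.length : ℤ)) s
              (M.initCfg u) hex q'
            set centry : TMCfg Q Γ :=
              ⟨q', (Tfull M (u.length : ℤ) s (M.initCfg u)).2.tape, (u.length : ℤ) - 1⟩
              with hcentry
            have hTT' : TT M u (s ++ [q']) = (exc M (u.length : ℤ) centry).1 := by
              rw [TT, happ]
            set c' : TMCfg Q Γ := ⟨q', Function.update c.tape c.head τ,
              if false then c.head + 1 else c.head - 1⟩ with hc'
            have hchead : c.head = (u.length : ℤ) := by rw [hhead]; simp
            have hagree' : AgreeL (u.length : ℤ) c' centry := by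
              refine ⟨rfl, ?_, ?_⟩
              · show (if false then c.head + 1 else c.head - 1) = (u.length : ℤ) - 1
                rw [if_neg (by simp), hchead]
              · intro i hi
                show Function.update c.tape c.head τ i = _
                rw [Function.update_apply, if_neg (by omega)]
                exact hleft i hi
            have hcomp : ∀ κ (d : TMCfg Q Γ), steps M c' κ = some d →
                M.run (u ++ z) (n + 1 + κ) = some d := by
              intro κ d hd
              rw [run_eq_steps, steps_add, ← run_eq_steps, hrun']
              simpa using hd
            cases hT2 : (exc M (u.length : ℤ) centry).1 with
            | exits p =>
              rw [hTT', hT2]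
              show SInvC M u z (SCfg.mid p (Function.update t 0 τ) 0 (s ++ [q'])) (k+1)
              obtain ⟨κ, d, hsteps, hst, hhd, hleft', hright'⟩ :=
                real_of_exc_exits hagree' (by rw [hcentry]; show _ - 1 ≤ _; omega) hT2
              refine ⟨⟨p, by rw [happ]; exact hT2⟩, n + 1 + κ, by omega, d,
                hcomp κ d hsteps, hst, by rw [hhd]; simp, ?_, ?_⟩
              · intro j
                have h1 : d.tape ((u.length : ℤ) + j) = c'.tape ((u.length : ℤ) + j) :=
                  hright' _ (by omega)
                rw [h1]
                show Function.update c.tape c.head τ ((u.length : ℤ) + j)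
                  = Function.update t 0 τ j
                rw [Function.update_apply, Function.update_apply, hchead]
                by_cases hj : j = 0
                · subst hj; rw [if_pos (by omega), if_pos rfl]
                · rw [if_neg (by omega), if_neg hj]
                  exact hright j
              · intro i hi
                rw [happ]
                exact hleft' i hi
            | halts b =>
              rw [hTT', hT2]
              obtain ⟨κ, d, hsteps, hnone, hb⟩ := real_of_exc_halts hagree' hT2
              cases b with
              | true =>
                show SInvC M u z SCfg.acc (k+1)
                exact ⟨n + 1 + κ, d, hcomp κ d hsteps, hnone, hb.mp rfl⟩
              | false =>
                show SInvC M u z SCfg.rej (k+1)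
                refine ⟨n + 1 + κ, d, hcomp κ d hsteps, hnone, fun hF => ?_⟩
                simpa using hb.mpr hF
            | diverges =>
              rw [hTT', hT2]
              show SInvC M u z SCfg.div (k+1)
              intro n₀
              have hdiv := real_of_exc_div hagree' hT2
              rcases le_or_gt n₀ (n + 1) with hle | hlt
              · have h1 : (M.run (u ++ z) (n+1)).isSome := by rw [hrun']; rfl
                rw [run_eq_steps] at h1 ⊢
                exact steps_some_of_le h1 n₀ hle
              · have heq : n₀ = (n + 1) + (n₀ - (n + 1)) := by omega
                rw [heq, run_eq_steps, steps_add, ← run_eq_steps, hrun']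
                simpa using hdiv (n₀ - (n + 1))

end WRproof2
namespace WRproof2
open DTM
variable {A Q Γ : Type*}

theorem accepts_iff_sacc (M : DTM A Q Γ) (u z : List A) :
    M.Accepts (u ++ z) ↔ ∃ k, Srun M (TT M u) z k = SCfg.acc := by
  constructor
  · rintro ⟨N, cN, hrunN, hnoneN, hFN⟩
    by_contra hno
    push_neg at hno
    have inv := sinv_all M u z (N + 1)
    cases hS : Srun M (TT M u) z (N + 1) with
    | acc => exact hno (N+1) hS
    | rej =>
      rw [hS] at inv
      obtain ⟨n', c', hrun', hnone', hnF⟩ := inv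
      have : c' = cN := by
        rw [run_eq_steps] at hrun' hrunN
        exact halt_unique hrun' hnone' hrunN hnoneN
      rw [this] at hnF
      exact hnF hFN
    | div =>
      rw [hS] at inv
      have h1 := inv (N + 1)
      have h2 : M.run (u ++ z) (N + 1) = none := by
        rw [DTM.run, hrunN]
        simpa using hnoneN
      rw [h2] at h1
      simp at h1
    | mid q t h s =>
      rw [hS] at inv
      obtain ⟨_, n, hn, c, hrun, _⟩ := inv
      have h2 : M.run (u ++ z) n = none := by
        rw [run_eq_steps] at hrunN ⊢
        have heq : n = N + 1 + (n - (N + 1)) := by omega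
        rw [heq]
        exact steps_halt hrunN hnoneN _
      rw [h2] at hrun
      simp at hrun
  · rintro ⟨k, hk⟩
    have inv := sinv_all M u z k
    rw [hk] at inv
    obtain ⟨n, c, hrun, hnone, hF⟩ := inv
    exact ⟨n, c, hrun, hnone, hF⟩

theorem accepts_congr {M : DTM A Q Γ} {u v : List A} (hTT : TT M u = TT M v) (z : List A) :
    (M.Accepts (u ++ z) ↔ M.Accepts (v ++ z)) := by
  rw [accepts_iff_sacc, accepts_iff_sacc, hTT]

theorem TT_take [Fintype Γ] {lt : Γ → Γ → Prop} (hso : IsStrictOrder Γ lt)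
    {M : DTM A Q Γ} (hδlt : ∀ p σ q τ d, M.δ p σ = some (q, τ, d) → lt τ σ)
    (x : List A) (s : List Q) (hs : Fintype.card Γ + 1 ≤ s.length) :
    TT M x s = TT M x (s.take (Fintype.card Γ + 1)) := by
  set Bd := Fintype.card Γ + 1 with hBd
  have hlen : (s.take Bd).length = Bd := by
    rw [List.length_take]; omega
  have hne : ∀ q, (Tfull M (x.length : ℤ) (s.take Bd) (M.initCfg x)).1 ≠ LOut.exits q := by
    intro q hq
    have := Tfull_exits_le hso hδlt x (s.take Bd) hq
    omega
  have h1 : TT M x s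
      = (Tfull M (x.length : ℤ) (s.take Bd ++ s.drop Bd) (M.initCfg x)).1 := by
    rw [List.take_append_drop]
    rfl
  rw [h1, Tfull_append_of_ne _ _ _ hne]
  rfl

theorem TT_ext [Fintype Γ] {lt : Γ → Γ → Prop} (hso : IsStrictOrder Γ lt)
    {M : DTM A Q Γ} (hδlt : ∀ p σ q τ d, M.δ p σ = some (q, τ, d) → lt τ σ)
    {u v : List A}
    (h : ∀ s : List Q, s.length ≤ Fintype.card Γ + 1 → TT M u s = TT M v s) :
    TT M u = TT M v := by
  funext s
  rcases le_or_gt s.length (Fintype.card Γ + 1) with hle | hgt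
  · exact h s hle
  · rw [TT_take hso hδlt u s (by omega), TT_take hso hδlt v s (by omega)]
    exact h _ (by rw [List.length_take]; omega)

instance finite_short_lists [Finite Q] (B : ℕ) : Finite {l : List Q // l.length ≤ B} := by
  haveI := Fintype.ofFinite Q
  refine Finite.of_injective (fun l => (fun i : Fin B => l.1[i.1]?)) ?_
  intro l1 l2 hf
  apply Subtype.ext
  apply List.ext_getElem?
  intro n
  rcases lt_or_ge n B with hn | hn
  · exact congrFun hf ⟨n, hn⟩
  · rw [List.getElem?_eq_none (le_trans l1.2 hn), List.getElem?_eq_none (le_trans l2.2 hn)]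

end WRproof2

/-- Every language accepted by a weight-reducing DTM is regular. -/
theorem stmt6 {A Q Γ : Type*} [Fintype A] [Fintype Q] [Fintype Γ]
    (M : DTM A Q Γ) (hwr : M.WeightReducing) :
    M.lang.IsRegular := by
  classical
  obtain ⟨lt, hso, hδlt⟩ := hwr
  apply WRproof.isRegular_of_finite_index M.lang
    (ι := {l : List Q // l.length ≤ Fintype.card Γ + 1} → WRproof2.LOut Q)
    (fun u => fun l => WRproof2.TT M u l.1)
  intro u v huv z
  have hres : ∀ s : List Q, s.length ≤ Fintype.card Γ + 1 →
      WRproof2.TT M u s = WRproof2.TT M v s := by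
    intro s hs
    exact congrFun huv ⟨s, hs⟩
  have hTT := WRproof2.TT_ext hso hδlt hres
  exact WRproof2.accepts_congr hTT z
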